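/- Let R, Z, u^t, u^θ : (p₁,p₂) × (t₁,t₂) → ℝ be smooth with R > 0, and set J = R'_p Z'_t − R'_t Z'_p and κ = R'_t Z''_{tt} − Z'_t R''_{tt} (primes denote partial derivatives). Assume at every point: (a) R'_t² + Z'_t² = 1; (b) u^t ∂u^t/∂t − R R'_t (u^θ)² = 0; (c) ∂u^θ/∂t + (2R'_t/R) u^θ = 0; (d) J ≠ 0 and ∂u^t/∂t + (R'_t/R + J'_t/J) u^t = 0; (e) κ (u^t)² + R Z'_t (u^θ)² = |J|⁻¹; and the normalizations u^t > 0 and (u^t)² + R²(u^θ)² = 1. Then there exist a smooth function α : (p₁,p₂) → (0,∞) and a smooth function b : (p₁,p₂) → ℝ such that for all (p,t): |b(p)| < R(p,t), u^θ = b(p)/R², u^t = √(R² − b(p)²)/R, √(R² − b(p)²)·|J| = α(p)², and κ R (R² − b(p)²) + b(p)² Z'_t = R³ √(R² − b(p)²)/α(p)². -/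

import Mathlib

/-- Partial derivative in the second variable (`t`). -/
noncomputable def pdt (F : ℝ → ℝ → ℝ) (p t : ℝ) : ℝ := deriv (fun s => F p s) t

/-- Partial derivative in the first variable (`p`). -/
noncomputable def pdp (F : ℝ → ℝ → ℝ) (p t : ℝ) : ℝ := deriv (fun s => F s t) p

/-- Second partial derivative in the second variable. -/
noncomputable def pdtt (F : ℝ → ℝ → ℝ) (p t : ℝ) : ℝ := deriv (fun s => pdt F p s) t

/-- The Jacobian `J = R'_p Z'_t − R'_t Z'_p`. -/
noncomputable def Jac (R Z : ℝ → ℝ → ℝ) (p t : ℝ) : ℝ :=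
  pdp R p t * pdt Z p t - pdt R p t * pdp Z p t

/-- The curvature `κ = R'_t Z''_{tt} − Z'_t R''_{tt}` of the curve `t ↦ (R(p,t), Z(p,t))`. -/
noncomputable def curv (R Z : ℝ → ℝ → ℝ) (p t : ℝ) : ℝ :=
  pdt R p t * pdtt Z p t - pdt Z p t * pdtt R p t

open Set

private lemma hasDerivAt_slice {F : ℝ → ℝ → ℝ} {U : Set (ℝ × ℝ)} (hU : IsOpen U)
    (hF : ContDiffOn ℝ (⊤ : ℕ∞) (fun v : ℝ × ℝ => F v.1 v.2) U) {p t : ℝ} (hpt : (p, t) ∈ U) :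
    HasDerivAt (fun s => F p s) (pdt F p t) t := by
  have h1 : ContDiffAt ℝ (⊤ : ℕ∞) (fun v : ℝ × ℝ => F v.1 v.2) (p, t) :=
    hF.contDiffAt (hU.mem_nhds hpt)
  have h2 : ContDiffAt ℝ (⊤ : ℕ∞) (fun s : ℝ => F p s) t := by
    have h3 : ContDiffAt ℝ (⊤ : ℕ∞) (fun s : ℝ => ((p, s) : ℝ × ℝ)) t :=
      (contDiffAt_const (c := p)).prodMk contDiffAt_id
    exact h1.comp t h3
  exact (h2.differentiableAt (by simp)).hasDerivAt

private lemma contDiffOn_pdt {F : ℝ → ℝ → ℝ} {U : Set (ℝ × ℝ)} (hU : IsOpen U)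
    (hF : ContDiffOn ℝ (⊤ : ℕ∞) (fun v : ℝ × ℝ => F v.1 v.2) U) :
    ContDiffOn ℝ (⊤ : ℕ∞) (fun v : ℝ × ℝ => pdt F v.1 v.2) U := by
  have hfd : ContDiffOn ℝ (⊤ : ℕ∞) (fderiv ℝ (fun v : ℝ × ℝ => F v.1 v.2)) U :=
    hF.fderiv_of_isOpen hU (by exact_mod_cast le_refl _)
  have h1 : ContDiffOn ℝ (⊤ : ℕ∞)
      (fun v : ℝ × ℝ => fderiv ℝ (fun v : ℝ × ℝ => F v.1 v.2) v ((0:ℝ), (1:ℝ))) U :=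
    hfd.clm_apply contDiffOn_const
  refine h1.congr ?_
  intro v hv
  have hdiff : DifferentiableAt ℝ (fun v : ℝ × ℝ => F v.1 v.2) v :=
    (hF.contDiffAt (hU.mem_nhds hv)).differentiableAt
      (by simp)
  have hφ : HasDerivAt (fun s : ℝ => ((v.1, s) : ℝ × ℝ)) ((0:ℝ), (1:ℝ)) v.2 :=
    (hasDerivAt_const _ _).prodMk (hasDerivAt_id _)
  have hcomp : HasDerivAt (fun s : ℝ => F v.1 s)
      (fderiv ℝ (fun v : ℝ × ℝ => F v.1 v.2) v ((0:ℝ), (1:ℝ))) v.2 := by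
    have := hdiff.hasFDerivAt.comp_hasDerivAt_of_eq v.2 hφ (by simp)
    exact this
  exact (hasDerivAt_slice hU hF (by simpa using hv)).unique hcomp

private lemma contDiffOn_pdp {F : ℝ → ℝ → ℝ} {U : Set (ℝ × ℝ)} (hU : IsOpen U)
    (hF : ContDiffOn ℝ (⊤ : ℕ∞) (fun v : ℝ × ℝ => F v.1 v.2) U) :
    ContDiffOn ℝ (⊤ : ℕ∞) (fun v : ℝ × ℝ => pdp F v.1 v.2) U := by
  have hfd : ContDiffOn ℝ (⊤ : ℕ∞) (fderiv ℝ (fun v : ℝ × ℝ => F v.1 v.2)) U :=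
    hF.fderiv_of_isOpen hU (by exact_mod_cast le_refl _)
  have h1 : ContDiffOn ℝ (⊤ : ℕ∞)
      (fun v : ℝ × ℝ => fderiv ℝ (fun v : ℝ × ℝ => F v.1 v.2) v ((1:ℝ), (0:ℝ))) U :=
    hfd.clm_apply contDiffOn_const
  refine h1.congr ?_
  intro v hv
  have hdiff : DifferentiableAt ℝ (fun v : ℝ × ℝ => F v.1 v.2) v :=
    (hF.contDiffAt (hU.mem_nhds hv)).differentiableAt
      (by simp)
  have hφ : HasDerivAt (fun s : ℝ => ((s, v.2) : ℝ × ℝ)) ((1:ℝ), (0:ℝ)) v.1 :=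
    (hasDerivAt_id _).prodMk (hasDerivAt_const _ _)
  have hcomp : HasDerivAt (fun s : ℝ => F s v.2)
      (fderiv ℝ (fun v : ℝ × ℝ => F v.1 v.2) v ((1:ℝ), (0:ℝ))) v.1 := by
    have := hdiff.hasFDerivAt.comp_hasDerivAt_of_eq v.1 hφ (by simp)
    exact this
  exact hcomp.deriv.symm.symm

private lemma contDiffOn_slice_p {F : ℝ → ℝ → ℝ} {s t : Set ℝ}
    (hF : ContDiffOn ℝ (⊤ : ℕ∞) (fun v : ℝ × ℝ => F v.1 v.2) (s ×ˢ t)) {t₀ : ℝ} (ht₀ : t₀ ∈ t) :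
    ContDiffOn ℝ (⊤ : ℕ∞) (fun p => F p t₀) s := by
  have h1 : ContDiffOn ℝ (⊤ : ℕ∞) (fun p : ℝ => ((p, t₀) : ℝ × ℝ)) s :=
    (contDiff_id.prodMk contDiff_const).contDiffOn
  exact hF.comp h1 (fun p hp => ⟨hp, ht₀⟩)

private lemma const_on_Ioo {g : ℝ → ℝ} {a b x y : ℝ}
    (hg : ∀ t ∈ Ioo a b, HasDerivAt g 0 t) (hx : x ∈ Ioo a b) (hy : y ∈ Ioo a b) : g x = g y := by
  apply (convex_Ioo a b).is_const_of_fderivWithin_eq_zero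
    (fun t ht => ((hg t ht).differentiableAt).differentiableWithinAt) ?_ hx hy
  intro t ht
  rw [fderivWithin_of_isOpen isOpen_Ioo ht]
  have h := (hg t ht).hasFDerivAt
  rw [h.fderiv]
  ext
  simp

/-- Theorem 6.1: for a normalized axisymmetric Gavrilov flow (equations
(a)–(e) with `u^t > 0` and `(u^t)² + R²(u^θ)² = 1`) there exist smooth functions
`α(p) > 0` and `b(p)` such that `|b| < R`, `u^θ = b/R²`, `u^t = √(R²−b²)/R`,
`√(R²−b²)·|J| = α²`, and `κR(R²−b²) + b²Z'_t = R³√(R²−b²)/α²`. -/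
theorem axisymmetric_gavrilov_structure (p₁ p₂ t₁ t₂ : ℝ) (R Z ut uθ : ℝ → ℝ → ℝ)
    (hR : ContDiffOn ℝ (⊤ : ℕ∞) (fun v : ℝ × ℝ => R v.1 v.2)
      (Set.Ioo p₁ p₂ ×ˢ Set.Ioo t₁ t₂))
    (hZ : ContDiffOn ℝ (⊤ : ℕ∞) (fun v : ℝ × ℝ => Z v.1 v.2)
      (Set.Ioo p₁ p₂ ×ˢ Set.Ioo t₁ t₂))
    (hut : ContDiffOn ℝ (⊤ : ℕ∞) (fun v : ℝ × ℝ => ut v.1 v.2)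
      (Set.Ioo p₁ p₂ ×ˢ Set.Ioo t₁ t₂))
    (huθ : ContDiffOn ℝ (⊤ : ℕ∞) (fun v : ℝ × ℝ => uθ v.1 v.2)
      (Set.Ioo p₁ p₂ ×ˢ Set.Ioo t₁ t₂))
    (hRpos : ∀ p ∈ Set.Ioo p₁ p₂, ∀ t ∈ Set.Ioo t₁ t₂, 0 < R p t)
    -- (a) arc-length parametrization
    (ha : ∀ p ∈ Set.Ioo p₁ p₂, ∀ t ∈ Set.Ioo t₁ t₂,
      (pdt R p t) ^ 2 + (pdt Z p t) ^ 2 = 1)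
    -- (b) t-component of the geodesic equation
    (hb : ∀ p ∈ Set.Ioo p₁ p₂, ∀ t ∈ Set.Ioo t₁ t₂,
      ut p t * pdt ut p t - R p t * pdt R p t * (uθ p t) ^ 2 = 0)
    -- (c) θ-component of the geodesic equation
    (hc : ∀ p ∈ Set.Ioo p₁ p₂, ∀ t ∈ Set.Ioo t₁ t₂,
      pdt uθ p t + (2 * pdt R p t / R p t) * uθ p t = 0)
    -- (d) nonvanishing Jacobian and the divergence relation
    (hd : ∀ p ∈ Set.Ioo p₁ p₂, ∀ t ∈ Set.Ioo t₁ t₂, Jac R Z p t ≠ 0)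
    (hd' : ∀ p ∈ Set.Ioo p₁ p₂, ∀ t ∈ Set.Ioo t₁ t₂,
      pdt ut p t + (pdt R p t / R p t + pdt (Jac R Z) p t / Jac R Z p t) * ut p t = 0)
    -- (e) second fundamental form relation
    (he : ∀ p ∈ Set.Ioo p₁ p₂, ∀ t ∈ Set.Ioo t₁ t₂,
      curv R Z p t * (ut p t) ^ 2 + R p t * pdt Z p t * (uθ p t) ^ 2 = |Jac R Z p t|⁻¹)
    -- normalizations
    (hpos : ∀ p ∈ Set.Ioo p₁ p₂, ∀ t ∈ Set.Ioo t₁ t₂, 0 < ut p t)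
    (hnorm : ∀ p ∈ Set.Ioo p₁ p₂, ∀ t ∈ Set.Ioo t₁ t₂,
      (ut p t) ^ 2 + (R p t) ^ 2 * (uθ p t) ^ 2 = 1) :
    ∃ α b : ℝ → ℝ, ContDiffOn ℝ (⊤ : ℕ∞) α (Set.Ioo p₁ p₂) ∧
      ContDiffOn ℝ (⊤ : ℕ∞) b (Set.Ioo p₁ p₂) ∧
      (∀ p ∈ Set.Ioo p₁ p₂, 0 < α p) ∧
      ∀ p ∈ Set.Ioo p₁ p₂, ∀ t ∈ Set.Ioo t₁ t₂,
        |b p| < R p t ∧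
        uθ p t = b p / (R p t) ^ 2 ∧
        ut p t = Real.sqrt ((R p t) ^ 2 - (b p) ^ 2) / R p t ∧
        Real.sqrt ((R p t) ^ 2 - (b p) ^ 2) * |Jac R Z p t| = (α p) ^ 2 ∧
        curv R Z p t * R p t * ((R p t) ^ 2 - (b p) ^ 2) + (b p) ^ 2 * pdt Z p t
          = (R p t) ^ 3 * Real.sqrt ((R p t) ^ 2 - (b p) ^ 2) / (α p) ^ 2 := by
  rcases Set.eq_empty_or_nonempty (Set.Ioo t₁ t₂) with hemp | ⟨t₀, ht₀⟩
  · refine ⟨fun _ => 1, fun _ => 0, contDiffOn_const, contDiffOn_const,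
      fun p _ => one_pos, fun p hp t ht => ?_⟩
    exact absurd (hemp ▸ ht) (Set.notMem_empty t)
  set U : Set (ℝ × ℝ) := Set.Ioo p₁ p₂ ×ˢ Set.Ioo t₁ t₂ with hU
  have hUopen : IsOpen U := isOpen_Ioo.prod isOpen_Ioo
  -- smoothness of the uncurried Jacobian
  have hJcd : ContDiffOn ℝ (⊤ : ℕ∞) (fun v : ℝ × ℝ => Jac R Z v.1 v.2) U := by
    have h1 := (contDiffOn_pdp hUopen hR).mul (contDiffOn_pdt hUopen hZ)
    have h2 := (contDiffOn_pdt hUopen hR).mul (contDiffOn_pdp hUopen hZ)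
    exact h1.sub h2
  -- key constancy 1 : R² uθ is independent of t
  have key1 : ∀ p ∈ Set.Ioo p₁ p₂, ∀ t ∈ Set.Ioo t₁ t₂,
      R p t ^ 2 * uθ p t = R p t₀ ^ 2 * uθ p t₀ := by
    intro p hp t ht
    refine const_on_Ioo (g := fun s => R p s ^ 2 * uθ p s) ?_ ht ht₀
    intro s hs
    have hR0 : R p s ≠ 0 := (hRpos p hp s hs).ne'
    have h1 := hasDerivAt_slice hUopen hR ⟨hp, hs⟩
    have h2 := hasDerivAt_slice hUopen huθ ⟨hp, hs⟩
    have h3 := (h1.pow 2).mul h2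
    refine h3.congr_deriv ?_; symm; simp only [Pi.pow_apply, Pi.mul_apply]
    have hcc := hc p hp s hs
    field_simp at hcc
    push_cast
    ring_nf
    ring_nf at hcc
    linear_combination (-(R p s)) * hcc
  -- key constancy 2 : ut * R * J is independent of t
  have key2 : ∀ p ∈ Set.Ioo p₁ p₂, ∀ t ∈ Set.Ioo t₁ t₂,
      ut p t * R p t * Jac R Z p t = ut p t₀ * R p t₀ * Jac R Z p t₀ := by
    intro p hp t ht
    refine const_on_Ioo (g := fun s => ut p s * R p s * Jac R Z p s) ?_ ht ht₀
    intro s hs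
    have hR0 : R p s ≠ 0 := (hRpos p hp s hs).ne'
    have hJ0 : Jac R Z p s ≠ 0 := hd p hp s hs
    have h1 := hasDerivAt_slice hUopen hut ⟨hp, hs⟩
    have h2 := hasDerivAt_slice hUopen hR ⟨hp, hs⟩
    have h3 := hasDerivAt_slice hUopen hJcd ⟨hp, hs⟩
    have h4 := (h1.mul h2).mul h3
    refine h4.congr_deriv ?_; symm; simp only [Pi.pow_apply, Pi.mul_apply]
    have hdd := hd' p hp s hs
    field_simp at hdd
    linear_combination -hdd
  refine ⟨fun p => Real.sqrt (Real.sqrt ((ut p t₀ * R p t₀ * Jac R Z p t₀) ^ 2)),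
      fun p => R p t₀ ^ 2 * uθ p t₀, ?_, ?_, ?_, ?_⟩
  · -- smoothness of α
    have hin : ContDiffOn ℝ (⊤ : ℕ∞)
        (fun p => (ut p t₀ * R p t₀ * Jac R Z p t₀) ^ 2) (Set.Ioo p₁ p₂) := by
      have h1 := contDiffOn_slice_p hut ht₀
      have h2 := contDiffOn_slice_p hR ht₀
      have h3 := contDiffOn_slice_p (s := Set.Ioo p₁ p₂) hJcd ht₀
      exact ((h1.mul h2).mul h3).pow 2
    have hpos2 : ∀ p ∈ Set.Ioo p₁ p₂, 0 < (ut p t₀ * R p t₀ * Jac R Z p t₀) ^ 2 := by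
      intro p hp
      have h0 := mul_ne_zero (mul_ne_zero (hpos p hp t₀ ht₀).ne' (hRpos p hp t₀ ht₀).ne')
        (hd p hp t₀ ht₀)
      positivity
    have hs1 := hin.sqrt (fun p hp => (hpos2 p hp).ne')
    exact hs1.sqrt (fun p hp => (Real.sqrt_pos.2 (hpos2 p hp)).ne')
  · -- smoothness of b
    exact ((contDiffOn_slice_p hR ht₀).pow 2).mul (contDiffOn_slice_p huθ ht₀)
  · -- positivity of α
    intro p hp
    apply Real.sqrt_pos.2
    apply Real.sqrt_pos.2
    have := mul_ne_zero (mul_ne_zero (hpos p hp t₀ ht₀).ne' (hRpos p hp t₀ ht₀).ne')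
      (hd p hp t₀ ht₀)
    positivity
  · -- the pointwise identities
    intro p hp t ht
    beta_reduce
    have hR0 : 0 < R p t := hRpos p hp t ht
    have hu0 : 0 < ut p t := hpos p hp t ht
    have hJ0 : Jac R Z p t ≠ 0 := hd p hp t ht
    set b : ℝ := R p t₀ ^ 2 * uθ p t₀ with hbdef
    set α : ℝ := Real.sqrt (Real.sqrt ((ut p t₀ * R p t₀ * Jac R Z p t₀) ^ 2)) with hαdef
    have e1 : b = R p t ^ 2 * uθ p t := (key1 p hp t ht).symm
    have hn := hnorm p hp t ht
    have e2 : R p t ^ 2 - b ^ 2 = (R p t * ut p t) ^ 2 := by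
      rw [e1]; linear_combination (-(R p t) ^ 2) * hn
    have e3 : 0 < R p t * ut p t := mul_pos hR0 hu0
    have e4 : Real.sqrt (R p t ^ 2 - b ^ 2) = R p t * ut p t := by
      rw [e2]; exact Real.sqrt_sq e3.le
    have hα2 : α ^ 2 = |ut p t₀ * R p t₀ * Jac R Z p t₀| := by
      rw [hαdef, Real.sq_sqrt (Real.sqrt_nonneg _), Real.sqrt_sq_eq_abs]
    have hα2' : α ^ 2 = R p t * ut p t * |Jac R Z p t| := by
      rw [hα2, ← key2 p hp t ht, abs_mul, abs_of_pos (mul_pos hu0 hR0)]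
      ring
    have hαpos : 0 < α := by
      apply Real.sqrt_pos.2
      apply Real.sqrt_pos.2
      have := mul_ne_zero (mul_ne_zero (hpos p hp t₀ ht₀).ne' (hRpos p hp t₀ ht₀).ne')
        (hd p hp t₀ ht₀)
      positivity
    have hbabs : |b| < R p t := by
      have h1 : b ^ 2 < R p t ^ 2 := by nlinarith [e2, e3]
      nlinarith [abs_nonneg b, sq_abs b]
    refine ⟨hbabs, ?_, ?_, ?_, ?_⟩
    · rw [e1]; field_simp [hR0.ne']
    · rw [e4]; field_simp [hR0.ne']
    · rw [e4, ← hα2']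
    · have hee := he p hp t ht
      have habs0 : |Jac R Z p t| ≠ 0 := abs_ne_zero.2 hJ0
      have hne : R p t * ut p t * |Jac R Z p t| ≠ 0 :=
        mul_ne_zero (mul_ne_zero hR0.ne' hu0.ne') habs0
      have e8 : |Jac R Z p t|⁻¹ = R p t * ut p t / α ^ 2 := by
        rw [hα2', eq_div_iff hne]
        field_simp
      rw [e8] at hee
      rw [e4, e2, e1]
      linear_combination (R p t) ^ 3 * hee
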